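/- Let n ≥ 1 and let a ≤ b be reals. Let V : ℝ × ℝⁿ → ℝ and f : ℝ × ℝⁿ → ℝⁿ be continuously differentiable, and define g : ℝ × ℝⁿ → ℝ by g(t,x) = ∂V/∂t(t,x) + ⟨∇ₓV(t,x), f(t,x)⟩. Assume that for all t ∈ [a,b] and all x ∈ ℝⁿ with V(t,x) = 1 one has ∇ₓV(t,x) ≠ 0. Suppose there exist δ > 0, t* ∈ [a,b], and x* ∈ ℝⁿ with V(t*,x*) = 1 and g(t*,x*) > δ. Then there exists h > 0 such that for every finite set S ⊆ [a,b] with the property that every point of [a,b] lies within distance h of some element of S, there exist τ ∈ S and y ∈ ℝⁿ with V(τ,y) = 1 and g(τ,y) > 0. -/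

import Mathlib

open Set

set_option maxHeartbeats 1000000

/-- Consequence of Lemma 3 of the paper: if a candidate Lyapunov function `V` violates,
by a fixed margin `δ > 0`, the descent condition on the level set `{V = 1}` somewhere on
`[a,b]`, then there is a mesh size `h > 0` such that every finite sample set
`S ⊆ [a,b]` of mesh at most `h` contains a sample time `τ` at which the sampled
feasibility conditions fail, i.e. there is `y` with `V(τ,y) = 1` and `g(τ,y) > 0`,
where `g(t,x) = ∂V/∂t + ⟨∇ₓV, f⟩`. -/
theorem fine_sampling_detects_violation
    (n : ℕ) (hn : 1 ≤ n) (a b : ℝ) (hab : a ≤ b)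
    (V : ℝ × EuclideanSpace ℝ (Fin n) → ℝ) (hV : ContDiff ℝ 1 V)
    (f : ℝ × EuclideanSpace ℝ (Fin n) → EuclideanSpace ℝ (Fin n)) (hf : ContDiff ℝ 1 f)
    (g : ℝ × EuclideanSpace ℝ (Fin n) → ℝ)
    (hg : ∀ p : ℝ × EuclideanSpace ℝ (Fin n),
      g p = deriv (fun s => V (s, p.2)) p.1
        + fderiv ℝ (fun y => V (p.1, y)) p.2 (f p))
    (hgrad : ∀ t ∈ Icc a b, ∀ x : EuclideanSpace ℝ (Fin n), V (t, x) = 1 →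
      fderiv ℝ (fun y => V (t, y)) x ≠ 0)
    (δ : ℝ) (hδ : 0 < δ) (tstar : ℝ) (htstar : tstar ∈ Icc a b)
    (xstar : EuclideanSpace ℝ (Fin n)) (hVx : V (tstar, xstar) = 1)
    (hgx : g (tstar, xstar) > δ) :
    ∃ h > (0 : ℝ), ∀ S : Finset ℝ, (∀ s ∈ S, s ∈ Icc a b) →
      (∀ t ∈ Icc a b, ∃ s ∈ S, |t - s| ≤ h) →
      ∃ τ ∈ S, ∃ y : EuclideanSpace ℝ (Fin n), V (τ, y) = 1 ∧ g (τ, y) > 0 := by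
  have hVd : Differentiable ℝ V := hV.differentiable one_ne_zero
  have hfd : Differentiable ℝ f := hf.differentiable one_ne_zero
  -- g p = fderiv ℝ V p (1, f p)
  have hgeq : g = fun p => fderiv ℝ V p (1, f p) := by
    funext p
    have hfV : HasFDerivAt V (fderiv ℝ V p) p := (hVd p).hasFDerivAt
    have hline : HasDerivAt (fun s : ℝ => (s, p.2))
        ((1:ℝ), (0 : EuclideanSpace ℝ (Fin n))) p.1 :=
      HasDerivAt.prodMk (hasDerivAt_id p.1) (hasDerivAt_const _ _)
    have h1 : HasDerivAt (fun s => V (s, p.2)) (fderiv ℝ V p (1, 0)) p.1 :=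
      hfV.comp_hasDerivAt p.1 hline
    have hinner : HasFDerivAt (fun y : EuclideanSpace ℝ (Fin n) => (p.1, y))
        (ContinuousLinearMap.inr ℝ ℝ (EuclideanSpace ℝ (Fin n))) p.2 :=
      HasFDerivAt.prodMk (hasFDerivAt_const p.1 p.2) (hasFDerivAt_id p.2)
    have h2 : HasFDerivAt (fun y => V (p.1, y))
        ((fderiv ℝ V p).comp (ContinuousLinearMap.inr ℝ ℝ (EuclideanSpace ℝ (Fin n)))) p.2 := by
      have hfVp : HasFDerivAt V (fderiv ℝ V p) ((p.1, p.2) : ℝ × EuclideanSpace ℝ (Fin n)) := by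
        simpa using hfV
      exact hfVp.comp p.2 hinner
    rw [hg p, h1.deriv, h2.fderiv]
    have : ((1:ℝ), (0:EuclideanSpace ℝ (Fin n))) + ((0:ℝ), f p) = (1, f p) := by simp
    rw [← this, map_add]
    simp [ContinuousLinearMap.comp_apply]
  have hgc : Continuous g := by
    rw [hgeq]
    exact (hV.continuous_fderiv one_ne_zero).clm_apply (continuous_const.prodMk hfd.continuous)
  -- pick direction v with D v = 1
  set D := fderiv ℝ (fun y => V (tstar, y)) xstar with hDdef
  have hD0 : D ≠ 0 := hgrad tstar htstar xstar hVx
  obtain ⟨u, hu⟩ : ∃ u, D u ≠ 0 := by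
    by_contra h
    push_neg at h
    exact hD0 (ContinuousLinearMap.ext fun u => by simpa using h u)
  set v : EuclideanSpace ℝ (Fin n) := (D u)⁻¹ • u with hvdef
  have hDv : D v = 1 := by
    rw [hvdef, map_smul, smul_eq_mul, inv_mul_cancel₀ hu]
  have hvne : v ≠ 0 := fun h => by rw [h, map_zero] at hDv; norm_num at hDv
  have hvnorm : 0 < ‖v‖ := norm_pos_iff.mpr hvne
  -- derivative of φ s = V (tstar, xstar + s • v) at 0 is 1
  have hdiff : DifferentiableAt ℝ (fun y => V (tstar, y)) xstar :=
    (hVd (tstar, xstar)).comp xstar (DifferentiableAt.prodMk (differentiableAt_const _) differentiableAt_id)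
  have hDfd : HasFDerivAt (fun y => V (tstar, y)) D xstar := hdiff.hasFDerivAt
  have hline0 : HasDerivAt (fun s : ℝ => xstar + s • v) v 0 := by
    simpa using ((hasDerivAt_id (0:ℝ)).smul_const v).const_add xstar
  have hDfd' : HasFDerivAt (fun y => V (tstar, y)) D ((fun s : ℝ => xstar + s • v) 0) := by
    simpa using hDfd
  have hφ : HasDerivAt (fun s : ℝ => V (tstar, xstar + s • v)) 1 0 := by
    have := hDfd'.comp_hasDerivAt 0 hline0
    rw [hDv] at this
    exact this
  have hφ0 : V (tstar, xstar + (0:ℝ) • v) = 1 := by simpa using hVx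
  -- slope eventually positive
  rw [hasDerivAt_iff_tendsto_slope] at hφ
  have hev : ∀ᶠ s in nhdsWithin (0:ℝ) {(0:ℝ)}ᶜ,
      0 < slope (fun s : ℝ => V (tstar, xstar + s • v)) 0 s :=
    hφ (Ioi_mem_nhds one_pos)
  obtain ⟨t0, ht0, hball⟩ := Metric.mem_nhdsWithin_iff.mp hev
  -- continuity of g near (tstar, xstar)
  obtain ⟨r, hr, hgball⟩ := Metric.continuousAt_iff.mp hgc.continuousAt δ hδ
  have hgpos : ∀ p : ℝ × EuclideanSpace ℝ (Fin n), dist p (tstar, xstar) < r → 0 < g p := by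
    intro p hp
    have := hgball hp
    rw [Real.dist_eq, abs_sub_lt_iff] at this
    linarith [this.2]
  -- choose ε
  set ε : ℝ := min (t0 / 2) (r / (2 * ‖v‖)) with hεdef
  have hε : 0 < ε := lt_min (by linarith) (by positivity)
  have hεt0 : ε < t0 := lt_of_le_of_lt (min_le_left _ _) (by linarith)
  have hεr : ε * ‖v‖ ≤ r / 2 := by
    have h1 : ε ≤ r / (2 * ‖v‖) := min_le_right _ _
    rw [le_div_iff₀ (by positivity)] at h1
    nlinarith
  -- values at ±ε
  have hslope : ∀ s : ℝ, s ≠ 0 → |s| < t0 →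
      0 < slope (fun s : ℝ => V (tstar, xstar + s • v)) 0 s := by
    intro s hs hst0
    exact hball ⟨Metric.mem_ball.mpr (by simpa [Real.dist_eq] using hst0), hs⟩
  have hAval : 1 < V (tstar, xstar + ε • v) := by
    have h' := hslope ε (ne_of_gt hε) (by rwa [abs_of_pos hε])
    rw [slope_def_field, hφ0] at h'
    rcases div_pos_iff.mp h' with ⟨h1, _⟩ | ⟨_, h2⟩
    · linarith
    · linarith
  have hBval : V (tstar, xstar + (-ε) • v) < 1 := by
    have h' := hslope (-ε) (neg_ne_zero.mpr (ne_of_gt hε)) (by rw [abs_neg, abs_of_pos hε]; exact hεt0)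
    rw [slope_def_field, hφ0] at h'
    rcases div_pos_iff.mp h' with ⟨_, h2⟩ | ⟨h1, _⟩
    · linarith
    · linarith
  -- continuity in τ
  have hA : Continuous fun τ => V (τ, xstar + ε • v) :=
    hV.continuous.comp (continuous_id.prodMk continuous_const)
  have hB : Continuous fun τ => V (τ, xstar + (-ε) • v) :=
    hV.continuous.comp (continuous_id.prodMk continuous_const)
  have hevA : ∀ᶠ τ in nhds tstar, 1 < V (τ, xstar + ε • v) :=
    hA.continuousAt (Ioi_mem_nhds hAval)
  have hevB : ∀ᶠ τ in nhds tstar, V (τ, xstar + (-ε) • v) < 1 :=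
    hB.continuousAt (Iio_mem_nhds hBval)
  obtain ⟨h₀, hh₀, hAB⟩ := Metric.eventually_nhds_iff.mp (hevA.and hevB)
  -- final mesh size
  refine ⟨min h₀ (r / 2) / 2, by positivity, ?_⟩
  intro S hS hmesh
  obtain ⟨τ, hτS, hτ⟩ := hmesh tstar htstar
  refine ⟨τ, hτS, ?_⟩
  have hdτ : dist τ tstar < min h₀ (r / 2) := by
    rw [Real.dist_eq]
    calc |τ - tstar| = |tstar - τ| := abs_sub_comm _ _
      _ ≤ min h₀ (r / 2) / 2 := hτ
      _ < min h₀ (r / 2) := by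
          have : 0 < min h₀ (r / 2) := lt_min hh₀ (by linarith)
          linarith
  have hdτh₀ : dist τ tstar < h₀ := lt_of_lt_of_le hdτ (min_le_left _ _)
  have hdτr : dist τ tstar < r / 2 := lt_of_lt_of_le hdτ (min_le_right _ _)
  obtain ⟨hA1, hB1⟩ := hAB hdτh₀
  -- IVT
  have hcont : ContinuousOn (fun s : ℝ => V (τ, xstar + s • v)) (Icc (-ε) ε) :=
    (hV.continuous.comp (continuous_const.prodMk
      (continuous_const.add (continuous_id.smul continuous_const)))).continuousOn
  have hsub := intermediate_value_Icc (by linarith : (-ε:ℝ) ≤ ε) hcont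
  have hmem : (1:ℝ) ∈ Icc (V (τ, xstar + (-ε) • v)) (V (τ, xstar + ε • v)) :=
    ⟨le_of_lt hB1, le_of_lt hA1⟩
  obtain ⟨s, hs, hVs⟩ := hsub hmem
  refine ⟨xstar + s • v, hVs, ?_⟩
  apply hgpos
  rw [Prod.dist_eq]
  have hsabs : |s| ≤ ε := abs_le.mpr ⟨hs.1, hs.2⟩
  have hdy : dist (xstar + s • v) xstar ≤ r / 2 := by
    rw [dist_eq_norm]
    have : xstar + s • v - xstar = s • v := by abel
    rw [this, norm_smul, Real.norm_eq_abs]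
    calc |s| * ‖v‖ ≤ ε * ‖v‖ := mul_le_mul_of_nonneg_right hsabs (norm_nonneg v)
      _ ≤ r / 2 := hεr
  exact max_lt (by linarith) (by linarith)
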